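/- Let n ≥ 1, let E = EuclideanSpace ℝ (Fin n), and let α and β be star partial homeomorphisms of E. Then α and β are Green H-equivalent — that is, there exist star partial homeomorphisms γ, δ, γ', δ' with β ≈ α.trans γ, α ≈ β.trans δ, β ≈ γ'.trans α and α ≈ δ'.trans β — if and only if α.source = β.source and α.target = β.target. -/
import Mathlib


noncomputable def radial {n : ℕ} (L : Set (EuclideanSpace ℝ (Fin n)))
    (u : EuclideanSpace ℝ (Fin n)) : ℝ :=
  sSup {c : ℝ | 0 ≤ c ∧ c • u ∈ L}

def IsStar {n : ℕ} (L : Set (EuclideanSpace ℝ (Fin n))) : Prop :=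
  IsCompact L ∧ (0 : EuclideanSpace ℝ (Fin n)) ∈ interior L ∧
    (∀ x ∈ L, segment ℝ 0 x ⊆ L) ∧
    ContinuousOn (radial L) (Metric.sphere (0 : EuclideanSpace ℝ (Fin n)) 1)

def IsStarPartialHomeo {n : ℕ}
    (α : PartialEquiv (EuclideanSpace ℝ (Fin n)) (EuclideanSpace ℝ (Fin n))) : Prop :=
  IsStar α.source ∧ IsStar α.target ∧
    ContinuousOn α α.source ∧ ContinuousOn α.symm α.target ∧
    α 0 = 0 ∧ ∀ x ∈ α.source, α '' (segment ℝ 0 x) = segment ℝ 0 (α x)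

section StarAux

variable {n : ℕ} {α β : PartialEquiv (EuclideanSpace ℝ (Fin n)) (EuclideanSpace ℝ (Fin n))}

lemma star_zero_mem_source (hα : IsStarPartialHomeo α) :
    (0 : EuclideanSpace ℝ (Fin n)) ∈ α.source :=
  interior_subset hα.1.2.1

lemma star_symm_zero (hα : IsStarPartialHomeo α) : α.symm 0 = 0 := by
  have h0 := star_zero_mem_source hα
  have h := α.left_inv h0
  rwa [hα.2.2.2.2.1] at h

lemma star_symm (hα : IsStarPartialHomeo α) : IsStarPartialHomeo α.symm := by
  obtain ⟨hS, hT, hc, hc', h0, hseg⟩ := hα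
  refine ⟨hT, hS, hc', by simpa using hc,
    star_symm_zero ⟨hS, hT, hc, hc', h0, hseg⟩, ?_⟩
  intro x hx
  simp only [PartialEquiv.symm_source] at hx
  have hy : α.symm x ∈ α.source := α.map_target hx
  have hsub : segment ℝ 0 (α.symm x) ⊆ α.source := hS.2.2.1 _ hy
  have h1 : α '' segment ℝ 0 (α.symm x) = segment ℝ 0 x := by
    rw [hseg _ hy, α.right_inv hx]
  calc α.symm '' segment ℝ 0 x
      = α.symm '' (α '' segment ℝ 0 (α.symm x)) := by rw [h1]
    _ = segment ℝ 0 (α.symm x) := by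
        rw [← Set.image_comp]
        have heq : Set.EqOn (↑α.symm ∘ ↑α) id (segment ℝ 0 (α.symm x)) :=
          fun z hz => α.left_inv (hsub hz)
        rw [Set.image_congr heq, Set.image_id]

lemma star_trans_source (h : α.target = β.source) : (α.trans β).source = α.source := by
  rw [PartialEquiv.trans_source]
  exact Set.inter_eq_left.mpr fun x hx => show α x ∈ β.source from h ▸ α.map_source hx

lemma star_trans_target (h : α.target = β.source) : (α.trans β).target = β.target := by
  rw [PartialEquiv.trans_target]
  refine Set.inter_eq_left.mpr fun x hx => ?_
  show β.symm x ∈ α.target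
  rw [h]; exact β.map_target hx

lemma star_trans (hα : IsStarPartialHomeo α) (hβ : IsStarPartialHomeo β)
    (h : α.target = β.source) : IsStarPartialHomeo (α.trans β) := by
  obtain ⟨hαS, hαT, hαc, hαc', hα0, hαseg⟩ := hα
  obtain ⟨hβS, hβT, hβc, hβc', hβ0, hβseg⟩ := hβ
  have hs := star_trans_source (β := β) h
  have ht := star_trans_target (β := β) h
  refine ⟨hs ▸ hαS, ht ▸ hβT, ?_, ?_, ?_, ?_⟩
  · rw [hs, PartialEquiv.coe_trans]
    exact hβc.comp hαc fun x hx => h ▸ α.map_source hx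
  · rw [ht, PartialEquiv.coe_trans_symm]
    exact hαc'.comp hβc' fun x hx => by rw [h]; exact β.map_target hx
  · simp [PartialEquiv.trans_apply, hα0, hβ0]
  · intro x hx
    rw [hs] at hx
    rw [PartialEquiv.coe_trans]
    simp only [Function.comp_apply]
    rw [← Set.image_image, hαseg x hx, hβseg _ (h ▸ α.map_source hx)]

lemma star_equiv_left (hα : IsStarPartialHomeo α) (hβ : IsStarPartialHomeo β)
    (hs : α.source = β.source) (ht : α.target = β.target) :
    β ≈ α.trans (α.symm.trans β) := by
  have h1 : α.symm.target = β.source := by rw [PartialEquiv.symm_target, hs]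
  have h2 : α.target = (α.symm.trans β).source := by
    rw [star_trans_source h1, PartialEquiv.symm_source]
  constructor
  · rw [star_trans_source h2, ← hs]
  · intro x hx
    have hx' : x ∈ α.source := hs ▸ hx
    simp [PartialEquiv.trans_apply, α.left_inv hx']

lemma star_equiv_right (hα : IsStarPartialHomeo α) (hβ : IsStarPartialHomeo β)
    (hs : α.source = β.source) (ht : α.target = β.target) :
    β ≈ (β.trans α.symm).trans α := by
  have h1 : β.target = α.symm.source := by rw [PartialEquiv.symm_source, ht]
  have h2 : (β.trans α.symm).target = α.source := by
    rw [star_trans_target h1, PartialEquiv.symm_target]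
  constructor
  · rw [star_trans_source h2, star_trans_source h1]
  · intro x hx
    have hx' : β x ∈ α.target := ht ▸ β.map_source hx
    simp [PartialEquiv.trans_apply, α.right_inv hx']

end StarAux

theorem stmt_11 (n : ℕ) (hn : 1 ≤ n)
    (α β : PartialEquiv (EuclideanSpace ℝ (Fin n)) (EuclideanSpace ℝ (Fin n)))
    (hα : IsStarPartialHomeo α) (hβ : IsStarPartialHomeo β) :
    (∃ γ δ γ' δ' : PartialEquiv (EuclideanSpace ℝ (Fin n)) (EuclideanSpace ℝ (Fin n)),
        IsStarPartialHomeo γ ∧ IsStarPartialHomeo δ ∧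
        IsStarPartialHomeo γ' ∧ IsStarPartialHomeo δ' ∧
        β ≈ α.trans γ ∧ α ≈ β.trans δ ∧ β ≈ γ'.trans α ∧ α ≈ δ'.trans β) ↔
      α.source = β.source ∧ α.target = β.target := by
  constructor
  · rintro ⟨γ, δ, γ', δ', -, -, -, -, h1, h2, h3, h4⟩
    constructor
    · apply Set.Subset.antisymm
      · have := PartialEquiv.EqOnSource.source_eq h2
        rw [PartialEquiv.trans_source] at this
        exact this ▸ Set.inter_subset_left
      · have := PartialEquiv.EqOnSource.source_eq h1
        rw [PartialEquiv.trans_source] at this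
        exact this ▸ Set.inter_subset_left
    · apply Set.Subset.antisymm
      · have := PartialEquiv.EqOnSource.target_eq h4
        rw [PartialEquiv.trans_target] at this
        exact this ▸ Set.inter_subset_left
      · have := PartialEquiv.EqOnSource.target_eq h3
        rw [PartialEquiv.trans_target] at this
        exact this ▸ Set.inter_subset_left
  · rintro ⟨hs, ht⟩
    refine ⟨α.symm.trans β, β.symm.trans α, β.trans α.symm, α.trans β.symm,
      ?_, ?_, ?_, ?_, ?_, ?_, ?_, ?_⟩
    · exact star_trans (star_symm hα) hβ (by rw [PartialEquiv.symm_target, hs])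
    · exact star_trans (star_symm hβ) hα (by rw [PartialEquiv.symm_target, hs])
    · exact star_trans hβ (star_symm hα) (by rw [PartialEquiv.symm_source, ht])
    · exact star_trans hα (star_symm hβ) (by rw [PartialEquiv.symm_source, ht])
    · exact star_equiv_left hα hβ hs ht
    · exact star_equiv_left hβ hα hs.symm ht.symm
    · exact star_equiv_right hα hβ hs ht
    · exact star_equiv_right hβ hα hs.symm ht.symm
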